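/- (One-dimensional main theorem.) Let N₁ = N(μ₁, σ₁²) and N₂ = N(μ₂, σ₂²) be one-dimensional Gaussians, and let P be a probability distribution on ℝ with finite second moment m₂ = E_P[x²]. There exists a constant K, depending only on μ₁, μ₂, σ₁, σ₂, and m₂, such that whenever KL(P||N₁) > C and KL(N₁||N₂) ≤ ε with ε < 1/12, one has KL(P||N₂) ≥ C - K√ε. -/

import Mathlib

open MeasureTheory ProbabilityTheory Classical

/-- Kullback-Leibler divergence of `P` from `Q`, valued in `EReal`:
`∫ log (dP/dQ) dP` when `P ≪ Q` and the integrand is integrable, `+∞` otherwise. -/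
noncomputable def klDiv {α : Type*} [MeasurableSpace α] (P Q : Measure α) : EReal :=
  if P ≪ Q ∧ Integrable (fun x => Real.log (P.rnDeriv Q x).toReal) P then
    ((∫ x, Real.log (P.rnDeriv Q x).toReal ∂P : ℝ) : EReal)
  else ⊤


open Real Set Filter
open scoped NNReal ENNReal

section aux

lemma integrable_sq_exp {b : ℝ} (hb : 0 < b) :
    Integrable (fun x : ℝ => x ^ 2 * Real.exp (-b * x ^ 2)) := by
  have := integrable_rpow_mul_exp_neg_mul_sq hb (s := 2) (by norm_num)
  simpa [Real.rpow_natCast] using this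

lemma tendsto_mul_exp_neg_sq {b : ℝ} (hb : 0 < b) :
    Tendsto (fun x : ℝ => x * Real.exp (-b * x ^ 2)) atTop (nhds 0) := by
  have h2 : Tendsto (fun x : ℝ => Real.exp (-(1/2) * x)) atTop (nhds 0) := by
    have : Tendsto (fun x : ℝ => -(1/2) * x) atTop atBot := by
      apply Tendsto.const_mul_atTop_of_neg (by norm_num) tendsto_id
    exact Real.tendsto_exp_atBot.comp this
  have h := (rpow_mul_exp_neg_mul_sq_isLittleO_exp_neg hb 1).trans_tendsto h2
  simpa [Real.rpow_one] using h

lemma integral_sq_exp_Ioi {b : ℝ} (hb : 0 < b) :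
    ∫ x in Ioi (0:ℝ), x ^ 2 * Real.exp (-b * x ^ 2)
      = Real.sqrt (π / b) / (4 * b) := by
  have hderiv : ∀ x ∈ Ici (0:ℝ), HasDerivAt (fun x : ℝ => x * Real.exp (-b * x ^ 2))
      (Real.exp (-b * x ^ 2) - 2 * b * (x ^ 2 * Real.exp (-b * x ^ 2))) x := by
    intro x _
    have h1 : HasDerivAt (fun x : ℝ => -b * x ^ 2) (-b * (2 * x)) x := by
      simpa using ((hasDerivAt_pow 2 x).const_mul (-b))
    have h2 := (h1.exp)
    have : HasDerivAt (fun y : ℝ => y * Real.exp (-b * y ^ 2))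
        (1 * Real.exp (-b * x ^ 2) + x * (Real.exp (-b * x ^ 2) * (-b * (2 * x)))) x :=
      (hasDerivAt_id x).mul h2
    convert this using 1
    ring
  have hint : IntegrableOn (fun x : ℝ =>
      Real.exp (-b * x ^ 2) - 2 * b * (x ^ 2 * Real.exp (-b * x ^ 2))) (Ioi 0) := by
    exact ((integrable_exp_neg_mul_sq hb).sub ((integrable_sq_exp hb).const_mul (2*b))).integrableOn
  have key := integral_Ioi_of_hasDerivAt_of_tendsto' hderiv hint (tendsto_mul_exp_neg_sq hb)
  simp only [mul_zero, zero_mul, sub_zero, Real.exp_zero] at key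
  rw [integral_sub ((integrable_exp_neg_mul_sq hb).integrableOn)
      (((integrable_sq_exp hb).const_mul (2*b)).integrableOn),
    integral_const_mul, integral_gaussian_Ioi] at key
  have h4 : (0:ℝ) < 4 * b := by linarith
  field_simp at key ⊢
  linarith

lemma integral_sq_exp {b : ℝ} (hb : 0 < b) :
    ∫ x : ℝ, x ^ 2 * Real.exp (-b * x ^ 2) = Real.sqrt (π / b) / (2 * b) := by
  have heq : ∫ x in Iic (0:ℝ), x ^ 2 * Real.exp (-b * x ^ 2)
      = ∫ x in Ioi (0:ℝ), x ^ 2 * Real.exp (-b * x ^ 2) := by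
    have := integral_comp_neg_Ioi (c := (0:ℝ)) (f := fun x => x ^ 2 * Real.exp (-b * x ^ 2))
    simp only [neg_zero, neg_sq] at this
    rw [← this]
  rw [← intervalIntegral.integral_Iic_add_Ioi (b := (0:ℝ)) ((integrable_sq_exp hb).integrableOn)
      ((integrable_sq_exp hb).integrableOn), heq, integral_sq_exp_Ioi hb]
  ring

lemma integral_mul_exp_neg_sq (b : ℝ) :
    ∫ x : ℝ, x * Real.exp (-b * x ^ 2) = 0 := by
  have := MeasureTheory.integral_neg_eq_self (fun x : ℝ => x * Real.exp (-b * x ^ 2)) volume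
  simp only [neg_sq, neg_mul, integral_neg, neg_neg] at this
  simp only [neg_mul]
  linarith

lemma gaussianPDFReal_centered (v : ℝ≥0) (x : ℝ) :
    gaussianPDFReal 0 v x = (Real.sqrt (2 * π * v))⁻¹ * Real.exp (-(2 * (v:ℝ))⁻¹ * x ^ 2) := by
  rw [gaussianPDFReal]
  congr 1
  rw [sub_zero]
  congr 1
  ring

lemma integral_gaussianReal {v : ℝ≥0} (hv : v ≠ 0) (μ : ℝ) (f : ℝ → ℝ) :
    ∫ x, f x ∂(gaussianReal μ v) = ∫ x, gaussianPDFReal μ v x * f x := by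
  rw [gaussianReal_of_var_ne_zero _ hv]
  have h : gaussianPDF μ v = fun x => ((Real.toNNReal (gaussianPDFReal μ v x) : ℝ≥0) : ℝ≥0∞) :=
    rfl
  rw [h, integral_withDensity_eq_integral_smul
    (by exact (measurable_gaussianPDFReal μ v).real_toNNReal) f]
  congr 1
  ext x
  rw [NNReal.smul_def, smul_eq_mul, Real.coe_toNNReal _ (gaussianPDFReal_nonneg μ v x)]

lemma integrable_gaussianReal_iff {v : ℝ≥0} (hv : v ≠ 0) (μ : ℝ) (f : ℝ → ℝ) :
    Integrable f (gaussianReal μ v) ↔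
      Integrable (fun x => f x * gaussianPDFReal μ v x) volume := by
  rw [gaussianReal_of_var_ne_zero _ hv]
  rw [integrable_withDensity_iff (measurable_gaussianPDF μ v)
    (Filter.Eventually.of_forall fun x => ENNReal.ofReal_lt_top)]
  constructor <;> intro h <;> refine h.congr (Filter.Eventually.of_forall fun x => ?_) <;>
    simp [gaussianPDF, ENNReal.toReal_ofReal (gaussianPDFReal_nonneg μ v x)]

lemma integrable_sq_gaussian {v : ℝ≥0} (hv : v ≠ 0) :
    Integrable (fun x => x ^ 2) (gaussianReal 0 v) := by
  rw [integrable_gaussianReal_iff hv]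
  have hvpos : 0 < (v : ℝ) := by positivity
  have hb : 0 < (2 * (v:ℝ))⁻¹ := by positivity
  refine (((integrable_sq_exp hb).const_mul ((Real.sqrt (2 * π * v))⁻¹)).congr
    (Filter.Eventually.of_forall fun x => ?_))
  simp only [gaussianPDFReal_centered]
  ring

lemma integrable_id_gaussian {v : ℝ≥0} (hv : v ≠ 0) :
    Integrable (fun x => x) (gaussianReal 0 v) := by
  rw [integrable_gaussianReal_iff hv]
  have hvpos : 0 < (v : ℝ) := by positivity
  have hb : 0 < (2 * (v:ℝ))⁻¹ := by positivity
  refine (((integrable_mul_exp_neg_mul_sq hb).const_mul ((Real.sqrt (2 * π * v))⁻¹)).congr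
    (Filter.Eventually.of_forall fun x => ?_))
  simp only [gaussianPDFReal_centered]
  ring

lemma integral_sq_gaussian {v : ℝ≥0} (hv : v ≠ 0) :
    ∫ x, x ^ 2 ∂(gaussianReal 0 v) = v := by
  rw [integral_gaussianReal hv]
  have hvpos : 0 < (v : ℝ) := by positivity
  have hb : 0 < (2 * (v:ℝ))⁻¹ := by positivity
  have : ∫ x : ℝ, gaussianPDFReal 0 v x * x ^ 2
      = (Real.sqrt (2 * π * v))⁻¹ * ∫ x : ℝ, x ^ 2 * Real.exp (-(2 * (v:ℝ))⁻¹ * x ^ 2) := by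
    rw [← integral_const_mul]
    congr 1; ext x; rw [gaussianPDFReal_centered]; ring
  rw [this, integral_sq_exp hb]
  have h1 : π / (2 * (v:ℝ))⁻¹ = 2 * π * v := by field_simp
  have h2 : Real.sqrt (2 * π * v) ≠ 0 := by positivity
  rw [h1]
  field_simp

lemma integral_id_gaussian {v : ℝ≥0} (hv : v ≠ 0) :
    ∫ x, x ∂(gaussianReal 0 v) = 0 := by
  rw [integral_gaussianReal hv]
  have : ∫ x : ℝ, gaussianPDFReal 0 v x * x
      = (Real.sqrt (2 * π * v))⁻¹ * ∫ x : ℝ, x * Real.exp (-(2 * (v:ℝ))⁻¹ * x ^ 2) := by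
    rw [← integral_const_mul]
    congr 1; ext x; rw [gaussianPDFReal_centered]; ring
  rw [this, integral_mul_exp_neg_sq, mul_zero]

lemma gaussianReal_eq_map {v : ℝ≥0} (μ : ℝ) :
    gaussianReal μ v = (gaussianReal 0 v).map (· + μ) := by
  rw [gaussianReal_map_add_const, zero_add]

lemma integrable_sq_sub_gaussian {v : ℝ≥0} (hv : v ≠ 0) (μ c : ℝ) :
    Integrable (fun x => (x - c) ^ 2) (gaussianReal μ v) := by
  have hf : Measurable (fun x : ℝ => (x - c) ^ 2) := by fun_prop
  rw [gaussianReal_eq_map μ, integrable_map_measure hf.aestronglyMeasurable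
    (measurable_id'.add_const μ).aemeasurable]
  have h : ((fun x => (x - c) ^ 2) ∘ (· + μ)) = fun x : ℝ =>
      x ^ 2 + (2 * (μ - c)) * x + (μ - c)^2 := by
    ext x; simp only [Function.comp]; ring
  rw [h]
  exact ((integrable_sq_gaussian hv).add (((integrable_id_gaussian hv).const_mul _))).add
    (integrable_const _)

lemma integral_sq_sub_gaussian {v : ℝ≥0} (hv : v ≠ 0) (μ c : ℝ) :
    ∫ x, (x - c) ^ 2 ∂(gaussianReal μ v) = v + (μ - c) ^ 2 := by
  have hf : Measurable (fun x : ℝ => (x - c) ^ 2) := by fun_prop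
  rw [gaussianReal_eq_map μ, integral_map (measurable_id'.add_const μ).aemeasurable
    hf.aestronglyMeasurable]
  have h : ∀ x : ℝ, (x + μ - c) ^ 2 = x ^ 2 + (2 * (μ - c)) * x + (μ - c)^2 := fun x => by ring
  simp_rw [h]
  have h1 := integrable_sq_gaussian hv
  have h2 : Integrable (fun x : ℝ => 2 * (μ - c) * x) (gaussianReal 0 v) :=
    (integrable_id_gaussian hv).const_mul _
  have h3 : Integrable (fun x : ℝ => x ^ 2 + 2 * (μ - c) * x) (gaussianReal 0 v) := h1.add h2
  rw [integral_add h3 (integrable_const _), integral_add h1 h2, integral_const_mul,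
    integral_sq_gaussian hv, integral_id_gaussian hv]
  simp

lemma key_bound {v₁ v₂ δ ε : ℝ} (h1 : 0 < v₁) (h2 : 0 < v₂)
    (h : (δ ^ 2 / v₂ + v₁ / v₂ - Real.log (v₁ / v₂) - 1) / 2 ≤ ε) (hε : ε < 1 / 12) :
    0 ≤ ε ∧ |δ| ≤ Real.sqrt (2 * ε) * Real.sqrt v₂ ∧
      |v₁ - v₂| ≤ 5 / 2 * Real.sqrt (2 * ε) * v₂ ∧
      |Real.log (v₁ / v₂)| ≤ 10 * Real.sqrt (2 * ε) := by
  set t := v₁ / v₂ with ht_def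
  have ht : 0 < t := div_pos h1 h2
  set s := Real.sqrt t with hs_def
  have hs : 0 < s := Real.sqrt_pos.mpr ht
  have hst : s ^ 2 = t := Real.sq_sqrt ht.le
  have hlog : Real.log t = 2 * Real.log s := by
    rw [← hst, Real.log_pow]; push_cast; ring
  have hls : Real.log s ≤ s - 1 := Real.log_le_sub_one_of_pos hs
  have htl0 : 0 ≤ t - Real.log t - 1 := by
    have := Real.log_le_sub_one_of_pos ht; linarith
  have hd0 : 0 ≤ δ ^ 2 / v₂ := div_nonneg (sq_nonneg _) h2.le
  have hε0 : 0 ≤ ε := by linarith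
  have h2ε : t - Real.log t - 1 ≤ 2 * ε := by linarith
  have hs1 : (s - 1) ^ 2 ≤ 2 * ε := by
    have : (s - 1) ^ 2 ≤ t - Real.log t - 1 := by rw [hlog, ← hst]; nlinarith
    linarith
  have hsabs : |s - 1| ≤ Real.sqrt (2 * ε) := by
    rw [← Real.sqrt_sq_eq_abs]
    exact Real.sqrt_le_sqrt hs1
  have hsq : Real.sqrt (2 * ε) ≤ 1 / 2 := by
    rw [show (1/2 : ℝ) = Real.sqrt ((1/2)^2) by rw [Real.sqrt_sq]; norm_num]
    exact Real.sqrt_le_sqrt (by norm_num; linarith)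
  have hsub : |s - 1| ≤ 1 / 2 := hsabs.trans hsq
  have hs_lb : 1 / 2 ≤ s := by cases abs_le.mp hsub; linarith
  have hs_ub : s ≤ 3 / 2 := by cases abs_le.mp hsub; linarith
  have ht_lb : 1 / 4 ≤ t := by nlinarith
  have ht1 : |t - 1| ≤ 5 / 2 * Real.sqrt (2 * ε) := by
    have : t - 1 = (s - 1) * (s + 1) := by nlinarith
    rw [this, abs_mul, abs_of_pos (by linarith : (0:ℝ) < s + 1)]
    calc |s - 1| * (s + 1) ≤ Real.sqrt (2 * ε) * (5/2) := by
          apply mul_le_mul hsabs (by linarith) (by linarith) (Real.sqrt_nonneg _)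
      _ = 5 / 2 * Real.sqrt (2 * ε) := by ring
  refine ⟨hε0, ?_, ?_, ?_⟩
  · have hδ2 : δ ^ 2 ≤ 2 * ε * v₂ := by
      have : δ ^ 2 / v₂ ≤ 2 * ε := by linarith
      calc δ ^ 2 = δ ^ 2 / v₂ * v₂ := by field_simp
        _ ≤ 2 * ε * v₂ := by apply mul_le_mul_of_nonneg_right this h2.le
    rw [← Real.sqrt_sq_eq_abs, ← Real.sqrt_mul (by linarith) v₂]
    exact Real.sqrt_le_sqrt hδ2
  · have : v₁ - v₂ = (t - 1) * v₂ := by rw [ht_def]; field_simp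
    rw [this, abs_mul, abs_of_pos h2]
    exact mul_le_mul_of_nonneg_right ht1 h2.le
  · rw [abs_le]
    constructor
    · have hinv : Real.log t⁻¹ ≤ t⁻¹ - 1 := Real.log_le_sub_one_of_pos (by positivity)
      rw [Real.log_inv] at hinv
      have h4 : t⁻¹ - 1 = (1 - t) / t := by field_simp
      have h5 : (1 - t) / t ≤ 4 * |t - 1| := by
        rw [div_le_iff₀ ht]
        calc 1 - t ≤ |t - 1| := by rw [abs_sub_comm]; exact le_abs_self _
          _ = 4 * |t - 1| * (1/4) := by ring
          _ ≤ 4 * |t - 1| * t := by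
              apply mul_le_mul_of_nonneg_left ht_lb (by positivity)
      have h7 : -Real.log t ≤ 4 * |t - 1| := by rw [h4] at hinv; linarith
      linarith
    · have := Real.log_le_sub_one_of_pos ht
      have h6 : t - 1 ≤ |t - 1| := le_abs_self _
      have h8 := Real.sqrt_nonneg (2*ε)
      linarith

lemma log_gaussianPDFReal {v : ℝ≥0} (hv : v ≠ 0) (μ x : ℝ) :
    Real.log (gaussianPDFReal μ v x)
      = -(Real.log (2 * π) + Real.log v) / 2 - (x - μ) ^ 2 / (2 * v) := by
  have hvpos : 0 < (v : ℝ) := by positivity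
  rw [gaussianPDFReal, Real.log_mul (by positivity) (Real.exp_ne_zero _), Real.log_exp,
    Real.log_inv, Real.log_sqrt (by positivity), Real.log_mul (by positivity) hvpos.ne']
  ring

lemma toReal_gaussianPDF_div (μ₁ μ₂ : ℝ) (v₁ v₂ : ℝ≥0) (x : ℝ) :
    ((gaussianPDF μ₁ v₁ x) / (gaussianPDF μ₂ v₂ x)).toReal
      = gaussianPDFReal μ₁ v₁ x / gaussianPDFReal μ₂ v₂ x := by
  rw [ENNReal.toReal_div]
  simp [gaussianPDF, ENNReal.toReal_ofReal (gaussianPDFReal_nonneg _ _ _)]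

lemma rnDeriv_gaussian {v₁ v₂ : ℝ≥0} (hv₁ : v₁ ≠ 0) (hv₂ : v₂ ≠ 0) (μ₁ μ₂ : ℝ) :
    (gaussianReal μ₁ v₁).rnDeriv (gaussianReal μ₂ v₂)
      =ᵐ[volume] fun x => gaussianPDF μ₁ v₁ x / gaussianPDF μ₂ v₂ x := by
  have hmeas : Measurable (fun x => gaussianPDF μ₁ v₁ x / gaussianPDF μ₂ v₂ x) :=
    (measurable_gaussianPDF _ _).div (measurable_gaussianPDF _ _)
  have hN₁ : gaussianReal μ₁ v₁ = (gaussianReal μ₂ v₂).withDensity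
      (fun x => gaussianPDF μ₁ v₁ x / gaussianPDF μ₂ v₂ x) := by
    rw [gaussianReal_of_var_ne_zero _ hv₁, gaussianReal_of_var_ne_zero _ hv₂,
      ← withDensity_mul _ (measurable_gaussianPDF _ _) hmeas]
    congr 1
    ext x
    rw [Pi.mul_apply, mul_comm, ENNReal.div_mul_cancel (gaussianPDF_pos _ hv₂ x).ne'
      ENNReal.ofReal_ne_top]
  have h := Measure.rnDeriv_withDensity (gaussianReal μ₂ v₂) hmeas
  rw [← hN₁] at h
  exact h.filter_mono (gaussianReal_absolutelyContinuous' μ₂ hv₂).ae_le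

lemma integrable_id_of_sq {P : Measure ℝ} [IsProbabilityMeasure P]
    (hx2 : Integrable (fun x => x ^ 2) P) : Integrable (fun x : ℝ => x) P := by
  refine Integrable.mono' ((integrable_const 1).add hx2) measurable_id.aestronglyMeasurable
    (Filter.Eventually.of_forall fun x => ?_)
  simp only [Pi.add_apply, Real.norm_eq_abs]
  nlinarith [sq_nonneg (|x| - 1), sq_abs x, abs_nonneg x]

lemma integrable_sq_sub {P : Measure ℝ} [IsProbabilityMeasure P]
    (hx2 : Integrable (fun x => x ^ 2) P) (c : ℝ) :
    Integrable (fun x => (x - c) ^ 2) P := by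
  have h : (fun x : ℝ => (x - c) ^ 2) = fun x => x ^ 2 + (-2 * c) * x + c ^ 2 := by
    ext x; ring
  rw [h]
  exact (hx2.add ((integrable_id_of_sq hx2).const_mul _)).add (integrable_const _)

lemma integral_sq_sub {P : Measure ℝ} [IsProbabilityMeasure P]
    (hx2 : Integrable (fun x => x ^ 2) P) (c : ℝ) :
    ∫ x, (x - c) ^ 2 ∂P = (∫ x, x ^ 2 ∂P) - 2 * c * (∫ x, x ∂P) + c ^ 2 := by
  have hx1 := integrable_id_of_sq hx2
  have h : ∀ x : ℝ, (x - c) ^ 2 = x ^ 2 + (-2 * c) * x + c ^ 2 := fun x => by ring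
  simp_rw [h]
  have h2 : Integrable (fun x : ℝ => -2 * c * x) P := hx1.const_mul _
  have h3 : Integrable (fun x : ℝ => x ^ 2 + -2 * c * x) P := hx2.add h2
  rw [integral_add h3 (integrable_const _), integral_add hx2 h2, integral_const_mul]
  simp
  ring

lemma abs_integral_id_le {P : Measure ℝ} [IsProbabilityMeasure P]
    (hx2 : Integrable (fun x => x ^ 2) P) :
    |∫ x, x ∂P| ≤ 1 + ∫ x, x ^ 2 ∂P := by
  have hx1 := integrable_id_of_sq hx2
  calc |∫ x, x ∂P| ≤ ∫ x, |x| ∂P := by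
        simpa [Real.norm_eq_abs] using norm_integral_le_integral_norm (μ := P) (f := fun x : ℝ => x)
    _ ≤ ∫ x, 1 + x ^ 2 ∂P := by
        refine integral_mono hx1.abs ((integrable_const 1).add hx2) fun x => ?_
        nlinarith [sq_nonneg (|x| - 1), sq_abs x, abs_nonneg x]
    _ = 1 + ∫ x, x ^ 2 ∂P := by
        rw [integral_add (integrable_const 1) hx2]; simp

section helper

lemma integrable_Lfun {P : Measure ℝ} [IsProbabilityMeasure P] {μ₁ μ₂ c w₁ w₂ : ℝ}
    (h2 : Integrable (fun x => (x - μ₂) ^ 2) P) (h1 : Integrable (fun x => (x - μ₁) ^ 2) P) :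
    Integrable (fun x => c + (x - μ₂) ^ 2 / (2 * w₂) - (x - μ₁) ^ 2 / (2 * w₁)) P :=
  ((integrable_const c).add (h2.div_const _)).sub (h1.div_const _)

lemma integral_Lfun {P : Measure ℝ} [IsProbabilityMeasure P] {μ₁ μ₂ c w₁ w₂ : ℝ}
    (h2 : Integrable (fun x => (x - μ₂) ^ 2) P) (h1 : Integrable (fun x => (x - μ₁) ^ 2) P) :
    ∫ x, (c + (x - μ₂) ^ 2 / (2 * w₂) - (x - μ₁) ^ 2 / (2 * w₁)) ∂P
      = c + (∫ x, (x - μ₂) ^ 2 ∂P) / (2 * w₂) - (∫ x, (x - μ₁) ^ 2 ∂P) / (2 * w₁) := by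
  have hf : Integrable (fun x => c + (x - μ₂) ^ 2 / (2 * w₂)) P := by
    exact (integrable_const c).add (h2.div_const _)
  have hg : Integrable (fun x => (x - μ₁) ^ 2 / (2 * w₁)) P := h1.div_const _
  have hf2 : Integrable (fun x : ℝ => (x - μ₂) ^ 2 / (2 * w₂)) P := h2.div_const _
  rw [integral_sub hf hg, integral_add (integrable_const c) hf2, integral_const, integral_div,
    integral_div]
  simp

end helper


end aux

/-- One-dimensional main theorem: for Gaussians `N₁ = N(μ₁,σ₁²)`, `N₂ = N(μ₂,σ₂²)`
there is a constant `K`, depending only on `μ₁, μ₂, σ₁, σ₂` and the second moment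
`m₂ = E_P[x²]`, such that whenever `KL(P‖N₁) > C` and `KL(N₁‖N₂) ≤ ε < 1/12`,
`KL(P‖N₂) ≥ C - K√ε`. -/
theorem kl_stability_one_dim (μ₁ μ₂ σ₁ σ₂ : ℝ) (hσ₁ : 0 < σ₁) (hσ₂ : 0 < σ₂)
    (m₂ : ℝ) :
    ∃ K : ℝ, ∀ P : Measure ℝ, IsProbabilityMeasure P →
      Integrable (fun x => x ^ 2) P → (∫ x, x ^ 2 ∂P) = m₂ →
      ∀ C ε : ℝ, ε < 1 / 12 →
        (C : EReal) < klDiv P (gaussianReal μ₁ (Real.toNNReal (σ₁ ^ 2))) →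
        klDiv (gaussianReal μ₁ (Real.toNNReal (σ₁ ^ 2)))
            (gaussianReal μ₂ (Real.toNNReal (σ₂ ^ 2))) ≤ (ε : EReal) →
        ((C - K * Real.sqrt ε : ℝ) : EReal)
          ≤ klDiv P (gaussianReal μ₂ (Real.toNNReal (σ₂ ^ 2))) := by
  set Q : ℝ := m₂ + 2 * |μ₂| * (1 + m₂) + μ₂ ^ 2 with hQ_def
  set M : ℝ := 2 * (1 + m₂) + |μ₁| + |μ₂| with hM_def
  set B : ℝ := 5 / 2 * Q + σ₂ * M with hB_def
  refine ⟨3 / 2 * (5 + B / (2 * σ₁ ^ 2)), ?_⟩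
  intro P hP hx2 hm2 C ε hε hC hKL
  set V₁ : ℝ≥0 := Real.toNNReal (σ₁ ^ 2) with hV₁_def
  set V₂ : ℝ≥0 := Real.toNNReal (σ₂ ^ 2) with hV₂_def
  have hv₁ : V₁ ≠ 0 := by
    simp only [hV₁_def, ne_eq, Real.toNNReal_eq_zero, not_le]
    positivity
  have hv₂ : V₂ ≠ 0 := by
    simp only [hV₂_def, ne_eq, Real.toNNReal_eq_zero, not_le]
    positivity
  have hV₁R : ((V₁ : ℝ)) = σ₁ ^ 2 := Real.coe_toNNReal _ (by positivity)
  have hV₂R : ((V₂ : ℝ)) = σ₂ ^ 2 := Real.coe_toNNReal _ (by positivity)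
  have hw₁ : (0:ℝ) < σ₁ ^ 2 := by positivity
  have hw₂ : (0:ℝ) < σ₂ ^ 2 := by positivity
  set N₁ := gaussianReal μ₁ V₁ with hN₁_def
  set N₂ := gaussianReal μ₂ V₂ with hN₂_def
  set L : ℝ → ℝ := fun x => Real.log (σ₂ ^ 2 / σ₁ ^ 2) / 2 + (x - μ₂) ^ 2 / (2 * σ₂ ^ 2)
      - (x - μ₁) ^ 2 / (2 * σ₁ ^ 2) with hL_def
  -- pointwise: log of pdf ratio equals L
  have hlogR : ∀ x, Real.log (gaussianPDFReal μ₁ V₁ x / gaussianPDFReal μ₂ V₂ x) = L x := by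
    intro x
    rw [Real.log_div (gaussianPDFReal_pos _ _ _ hv₁).ne' (gaussianPDFReal_pos _ _ _ hv₂).ne',
      log_gaussianPDFReal hv₁, log_gaussianPDFReal hv₂, hL_def]
    have : Real.log (σ₂ ^ 2 / σ₁ ^ 2) = Real.log (σ₂ ^ 2) - Real.log (σ₁ ^ 2) :=
      Real.log_div hw₂.ne' hw₁.ne'
    simp only [hV₁R, hV₂R]
    rw [this]
    ring
  -- Part 1: extract the parameter bound from hKL
  rw [klDiv] at hKL
  split_ifs at hKL with h12
  swap
  · exact absurd hKL (EReal.coe_lt_top ε).not_ge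
  have hrn12 : (fun x => Real.log ((N₁.rnDeriv N₂ x)).toReal) =ᵐ[N₁] L := by
    have h := (rnDeriv_gaussian hv₁ hv₂ μ₁ μ₂).filter_mono
      (gaussianReal_absolutelyContinuous μ₁ hv₁).ae_le
    filter_upwards [h] with x hx
    rw [hx, toReal_gaussianPDF_div, hlogR]
  have hIL : ∫ x, L x ∂N₁ ≤ ε := by
    have := integral_congr_ae hrn12
    rw [this] at hKL
    exact_mod_cast hKL
  have hILval : ∫ x, L x ∂N₁
      = Real.log (σ₂ ^ 2 / σ₁ ^ 2) / 2 + (σ₁ ^ 2 + (μ₁ - μ₂) ^ 2) / (2 * σ₂ ^ 2) - 1 / 2 := by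
    rw [hL_def]
    rw [integral_Lfun (integrable_sq_sub_gaussian hv₁ μ₁ μ₂) (integrable_sq_sub_gaussian hv₁ μ₁ μ₁),
      integral_sq_sub_gaussian hv₁ μ₁ μ₂, integral_sq_sub_gaussian hv₁ μ₁ μ₁, hV₁R]
    have h0 : ((σ₁:ℝ) ^ 2 + (μ₁ - μ₁) ^ 2) / (2 * σ₁ ^ 2) = 1 / 2 := by
      rw [show ((σ₁:ℝ) ^ 2 + (μ₁ - μ₁) ^ 2) = σ₁ ^ 2 by ring]
      field_simp
    rw [h0]
  have hparam : ((μ₁ - μ₂) ^ 2 / (σ₂ ^ 2) + σ₁ ^ 2 / σ₂ ^ 2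
      - Real.log (σ₁ ^ 2 / σ₂ ^ 2) - 1) / 2 ≤ ε := by
    have hlogflip : Real.log (σ₂ ^ 2 / σ₁ ^ 2) = - Real.log (σ₁ ^ 2 / σ₂ ^ 2) := by
      rw [Real.log_div hw₂.ne' hw₁.ne', Real.log_div hw₁.ne' hw₂.ne']; ring
    rw [hILval, hlogflip] at hIL
    have heq : - Real.log (σ₁ ^ 2 / σ₂ ^ 2) / 2 + (σ₁ ^ 2 + (μ₁ - μ₂) ^ 2) / (2 * σ₂ ^ 2) - 1 / 2
        = ((μ₁ - μ₂) ^ 2 / (σ₂ ^ 2) + σ₁ ^ 2 / σ₂ ^ 2 - Real.log (σ₁ ^ 2 / σ₂ ^ 2) - 1) / 2 := by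
      field_simp
      ring
    linarith [heq ▸ hIL]
  obtain ⟨hε0, hδ, hvd, hlogt⟩ := key_bound hw₁ hw₂ hparam hε
  rw [Real.sqrt_sq hσ₂.le] at hδ
  have hsq2 : Real.sqrt (2 * ε) ≤ 3 / 2 * Real.sqrt ε := by
    rw [Real.sqrt_mul (by norm_num) ε]
    have h2 : Real.sqrt 2 ≤ 3 / 2 := by
      rw [show (3/2 : ℝ) = Real.sqrt ((3/2)^2) by rw [Real.sqrt_sq]; norm_num]
      exact Real.sqrt_le_sqrt (by norm_num)
    exact mul_le_mul_of_nonneg_right h2 (Real.sqrt_nonneg ε)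
  -- Part 2: the P side
  rw [klDiv]
  split_ifs with h2
  swap
  · exact le_top
  obtain ⟨hacP2, hintP2⟩ := h2
  have hacP1 : P ≪ N₁ := hacP2.trans ((gaussianReal_absolutelyContinuous μ₂ hv₂).trans
    (gaussianReal_absolutelyContinuous' μ₁ hv₁))
  have hacPvol : P ≪ (volume : Measure ℝ) := hacP2.trans (gaussianReal_absolutelyContinuous μ₂ hv₂)
  have hrnP : (fun x => Real.log ((P.rnDeriv N₂ x)).toReal)
      =ᵐ[P] fun x => Real.log ((P.rnDeriv N₁ x)).toReal + L x := by
    have e1 : P.rnDeriv N₁ * N₁.rnDeriv N₂ =ᵐ[P] P.rnDeriv N₂ :=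
      (Measure.rnDeriv_mul_rnDeriv hacP1).filter_mono hacP2.ae_le
    have e2 : N₁.rnDeriv N₂ =ᵐ[P] fun x => gaussianPDF μ₁ V₁ x / gaussianPDF μ₂ V₂ x :=
      (rnDeriv_gaussian hv₁ hv₂ μ₁ μ₂).filter_mono hacPvol.ae_le
    have e3 : ∀ᵐ x ∂P, P.rnDeriv N₁ x ≠ ∞ :=
      hacP1.ae_le (Measure.rnDeriv_ne_top P N₁)
    have e4 : ∀ᵐ x ∂P, 0 < P.rnDeriv N₁ x := Measure.rnDeriv_pos hacP1
    filter_upwards [e1, e2, e3, e4] with x h1 h2' h3 h4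
    rw [← h1, Pi.mul_apply, h2', ENNReal.toReal_mul, toReal_gaussianPDF_div,
      Real.log_mul (ENNReal.toReal_pos h4.ne' h3).ne'
        (div_pos (gaussianPDFReal_pos _ _ _ hv₁) (gaussianPDFReal_pos _ _ _ hv₂)).ne',
      hlogR]
  have hintL_P : Integrable L P := by
    rw [hL_def]
    exact integrable_Lfun (integrable_sq_sub hx2 μ₂) (integrable_sq_sub hx2 μ₁)
  have hintP1 : Integrable (fun x => Real.log ((P.rnDeriv N₁ x)).toReal) P := by
    have h5 : Integrable (fun x => Real.log ((P.rnDeriv N₁ x)).toReal + L x) P :=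
      hintP2.congr hrnP
    exact (h5.sub hintL_P).congr (Filter.Eventually.of_forall fun x => by simp)
  rw [klDiv, if_pos ⟨hacP1, hintP1⟩] at hC
  have hCr : C < ∫ x, Real.log ((P.rnDeriv N₁ x)).toReal ∂P := by exact_mod_cast hC
  have hI2 : ∫ x, Real.log ((P.rnDeriv N₂ x)).toReal ∂P
      = (∫ x, Real.log ((P.rnDeriv N₁ x)).toReal ∂P) + ∫ x, L x ∂P := by
    rw [integral_congr_ae hrnP, integral_add hintP1 hintL_P]
  -- Part 3: bound ∫ L dP
  set m₁ : ℝ := ∫ x, x ∂P with hm₁_def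
  have hm₂0 : 0 ≤ m₂ := hm2 ▸ integral_nonneg fun x => sq_nonneg x
  have hm₁b : |m₁| ≤ 1 + m₂ := hm2 ▸ abs_integral_id_le hx2
  set S₁ : ℝ := m₂ - 2 * μ₁ * m₁ + μ₁ ^ 2 with hS₁_def
  set S₂ : ℝ := m₂ - 2 * μ₂ * m₁ + μ₂ ^ 2 with hS₂_def
  have hS₂val : ∫ x, (x - μ₂) ^ 2 ∂P = S₂ := by
    rw [integral_sq_sub hx2 μ₂, hm2, hS₂_def]
  have hS₁val : ∫ x, (x - μ₁) ^ 2 ∂P = S₁ := by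
    rw [integral_sq_sub hx2 μ₁, hm2, hS₁_def]
  have hS₂nn : 0 ≤ S₂ := hS₂val ▸ integral_nonneg fun x => sq_nonneg _
  have hS₂le : S₂ ≤ Q := by
    have h1 : |μ₂ * m₁| ≤ |μ₂| * (1 + m₂) := by
      rw [abs_mul]
      exact mul_le_mul_of_nonneg_left hm₁b (abs_nonneg _)
    have h2 := neg_abs_le (μ₂ * m₁)
    rw [hS₂_def, hQ_def]
    linarith
  have hQnn : 0 ≤ Q := by rw [hQ_def]; positivity
  have hMb : |2 * m₁ - μ₁ - μ₂| ≤ M := by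
    rw [hM_def, abs_le]
    obtain ⟨ha, hb⟩ := abs_le.mp hm₁b
    constructor
    · linarith [le_abs_self μ₁, le_abs_self μ₂]
    · linarith [neg_abs_le μ₁, neg_abs_le μ₂]
  have hMnn : 0 ≤ M := by rw [hM_def]; positivity
  have hILP : ∫ x, L x ∂P = Real.log (σ₂ ^ 2 / σ₁ ^ 2) / 2 + S₂ / (2 * σ₂ ^ 2)
      - S₁ / (2 * σ₁ ^ 2) := by
    rw [hL_def, integral_Lfun (integrable_sq_sub hx2 μ₂) (integrable_sq_sub hx2 μ₁),
      hS₂val, hS₁val]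
  -- bound |A|
  have hid : S₂ / (2 * σ₂ ^ 2) - S₁ / (2 * σ₁ ^ 2)
      = ((σ₁ ^ 2 - σ₂ ^ 2) * S₂ + σ₂ ^ 2 * ((μ₁ - μ₂) * (2 * m₁ - μ₁ - μ₂)))
        / (2 * σ₁ ^ 2 * σ₂ ^ 2) := by
    rw [hS₁_def, hS₂_def]
    field_simp
    ring
  have hAnum : |(σ₁ ^ 2 - σ₂ ^ 2) * S₂ + σ₂ ^ 2 * ((μ₁ - μ₂) * (2 * m₁ - μ₁ - μ₂))|
      ≤ Real.sqrt (2 * ε) * B * σ₂ ^ 2 := by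
    calc |(σ₁ ^ 2 - σ₂ ^ 2) * S₂ + σ₂ ^ 2 * ((μ₁ - μ₂) * (2 * m₁ - μ₁ - μ₂))|
        ≤ |(σ₁ ^ 2 - σ₂ ^ 2) * S₂| + |σ₂ ^ 2 * ((μ₁ - μ₂) * (2 * m₁ - μ₁ - μ₂))| := abs_add_le _ _
      _ = |σ₁ ^ 2 - σ₂ ^ 2| * S₂ + σ₂ ^ 2 * (|μ₁ - μ₂| * |2 * m₁ - μ₁ - μ₂|) := by
          rw [abs_mul, abs_of_nonneg hS₂nn, abs_mul, abs_of_pos hw₂, abs_mul]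
      _ ≤ (5 / 2 * Real.sqrt (2 * ε) * σ₂ ^ 2) * Q
            + σ₂ ^ 2 * ((Real.sqrt (2 * ε) * σ₂) * M) := by
          refine add_le_add (mul_le_mul hvd hS₂le hS₂nn (by positivity)) ?_
          exact mul_le_mul_of_nonneg_left
            (mul_le_mul hδ hMb (abs_nonneg _) (by positivity)) hw₂.le
      _ = Real.sqrt (2 * ε) * B * σ₂ ^ 2 := by rw [hB_def]; ring
  have hA : |S₂ / (2 * σ₂ ^ 2) - S₁ / (2 * σ₁ ^ 2)| ≤ Real.sqrt (2 * ε) * B / (2 * σ₁ ^ 2) := by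
    rw [hid, abs_div, abs_of_pos (by positivity : (0:ℝ) < 2 * σ₁ ^ 2 * σ₂ ^ 2)]
    calc |(σ₁ ^ 2 - σ₂ ^ 2) * S₂ + σ₂ ^ 2 * ((μ₁ - μ₂) * (2 * m₁ - μ₁ - μ₂))|
          / (2 * σ₁ ^ 2 * σ₂ ^ 2)
        ≤ (Real.sqrt (2 * ε) * B * σ₂ ^ 2) / (2 * σ₁ ^ 2 * σ₂ ^ 2) := by
          gcongr
      _ = Real.sqrt (2 * ε) * B / (2 * σ₁ ^ 2) := by
          rw [div_eq_div_iff (by positivity) (by positivity)]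
          ring
  have hBnn : (0:ℝ) ≤ B := by
    rw [hB_def]
    exact add_nonneg (mul_nonneg (by norm_num) hQnn) (mul_nonneg hσ₂.le hMnn)
  have hT : |Real.log (σ₂ ^ 2 / σ₁ ^ 2) / 2| ≤ 5 * Real.sqrt (2 * ε) := by
    have hlogflip : Real.log (σ₂ ^ 2 / σ₁ ^ 2) = - Real.log (σ₁ ^ 2 / σ₂ ^ 2) := by
      rw [Real.log_div hw₂.ne' hw₁.ne', Real.log_div hw₁.ne' hw₂.ne']; ring
    rw [abs_div, abs_two, hlogflip, abs_neg]
    linarith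
  have hLb : |∫ x, L x ∂P| ≤ 3 / 2 * (5 + B / (2 * σ₁ ^ 2)) * Real.sqrt ε := by
    rw [hILP]
    have hre : Real.log (σ₂ ^ 2 / σ₁ ^ 2) / 2 + S₂ / (2 * σ₂ ^ 2) - S₁ / (2 * σ₁ ^ 2)
        = Real.log (σ₂ ^ 2 / σ₁ ^ 2) / 2 + (S₂ / (2 * σ₂ ^ 2) - S₁ / (2 * σ₁ ^ 2)) := by ring
    rw [hre]
    calc |Real.log (σ₂ ^ 2 / σ₁ ^ 2) / 2 + (S₂ / (2 * σ₂ ^ 2) - S₁ / (2 * σ₁ ^ 2))|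
        ≤ |Real.log (σ₂ ^ 2 / σ₁ ^ 2) / 2| + |S₂ / (2 * σ₂ ^ 2) - S₁ / (2 * σ₁ ^ 2)| :=
          abs_add_le _ _
      _ ≤ 5 * Real.sqrt (2 * ε) + Real.sqrt (2 * ε) * B / (2 * σ₁ ^ 2) := add_le_add hT hA
      _ = Real.sqrt (2 * ε) * (5 + B / (2 * σ₁ ^ 2)) := by ring
      _ ≤ 3 / 2 * Real.sqrt ε * (5 + B / (2 * σ₁ ^ 2)) := by
          apply mul_le_mul_of_nonneg_right hsq2
          positivity
      _ = 3 / 2 * (5 + B / (2 * σ₁ ^ 2)) * Real.sqrt ε := by ring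
  rw [EReal.coe_le_coe_iff, hI2]
  have hnl := neg_abs_le (∫ x, L x ∂P)
  linarith
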